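/- Let A be the adjacency matrix of a (k,ε)-expander with left degree d and ε < 1/6. Let u, v ∈ ℝⁿ with ‖u‖₁ ≥ ‖v‖₁ − Δ for some Δ > 0. Let S be the set of the k largest-magnitude coefficients of u and S̄ its complement. Assume the inequality ‖Au−Av‖₁ + 2dε‖u−v‖₁ ≥ (1−2ε)d‖(u−v)_S‖₁ holds. Then ‖u−v‖₁ ≤ ((1−2ε)/(1−6ε))·(2‖u_{S̄}‖₁ + Δ) + (2/(d(1−6ε)))·‖Au−Av‖₁. -/

import Mathlib

open scoped Classical

/-- Recovery guarantee (Theorem 1 of the paper) for expander sensing matrices,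
    taking the Berinde et al. auxiliary inequality as a hypothesis. -/
theorem expander_recovery
    (m n k : ℕ) (d : ℕ) (ε Δ : ℝ) (A : Matrix (Fin m) (Fin n) ℝ)
    (hd : 0 < (d : ℝ)) (hε0 : 0 ≤ ε) (hε : ε < 1/6) (hΔ : 0 < Δ)
    (u v : Fin n → ℝ) (S : Finset (Fin n)) (hS : S.card = k)
    (hSlargest : ∀ i ∈ S, ∀ j ∉ S, |u j| ≤ |u i|)
    (hnorm : ∑ i, |u i| ≥ (∑ i, |v i|) - Δ)
    (haux : ∑ j, |A.mulVec u j - A.mulVec v j| + 2 * d * ε * ∑ i, |u i - v i|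
      ≥ (1 - 2 * ε) * d * ∑ i ∈ S, |u i - v i|) :
    ∑ i, |u i - v i| ≤
      ((1 - 2 * ε) / (1 - 6 * ε)) * (2 * (∑ i ∈ Sᶜ, |u i|) + Δ)
        + (2 / (d * (1 - 6 * ε))) * ∑ j, |A.mulVec u j - A.mulVec v j| := by
  set T := ∑ i, |u i - v i| with hT
  set B := ∑ j, |A.mulVec u j - A.mulVec v j| with hB
  set X := 2 * (∑ i ∈ Sᶜ, |u i|) + Δ with hX
  -- split sums over S and Sᶜ
  have hsplitw : ∑ i ∈ S, |u i - v i| + ∑ i ∈ Sᶜ, |u i - v i| = T := by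
    simpa using Finset.sum_add_sum_compl S (fun i => |u i - v i|)
  have hsplitu : ∑ i ∈ S, |u i| + ∑ i ∈ Sᶜ, |u i| = ∑ i, |u i| := by
    simpa using Finset.sum_add_sum_compl S (fun i => |u i|)
  have hsplitv : ∑ i ∈ S, |v i| + ∑ i ∈ Sᶜ, |v i| = ∑ i, |v i| := by
    simpa using Finset.sum_add_sum_compl S (fun i => |v i|)
  -- tail triangle inequality
  have htail : ∑ i ∈ Sᶜ, |u i - v i| ≤ ∑ i ∈ Sᶜ, |u i| + ∑ i ∈ Sᶜ, |v i| := by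
    rw [← Finset.sum_add_distrib]
    exact Finset.sum_le_sum fun i _ => abs_sub _ _
  -- on S: |u| - |u - v| ≤ |v|
  have hhead : ∑ i ∈ S, |u i| - ∑ i ∈ S, |u i - v i| ≤ ∑ i ∈ S, |v i| := by
    rw [← Finset.sum_sub_distrib]
    refine Finset.sum_le_sum fun i _ => ?_
    have := abs_sub_abs_le_abs_sub (u i) (v i)
    linarith
  -- main combinatorial bound: T ≤ 2 ∑_S |u-v| + X
  have hmain : T ≤ 2 * ∑ i ∈ S, |u i - v i| + X := by
    have h1 : ∑ i ∈ Sᶜ, |v i| ≤ ∑ i ∈ Sᶜ, |u i| + ∑ i ∈ S, |u i - v i| + Δ := by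
      linarith
    linarith
  have hc : (0:ℝ) < 1 - 6 * ε := by linarith
  have hdc : (0:ℝ) < (d:ℝ) * (1 - 6 * ε) := by positivity
  have hkey : (d:ℝ) * (1 - 6 * ε) * T ≤ (1 - 2 * ε) * d * X + 2 * B := by
    have h2 : (1 - 2 * ε) * d * T ≤ 2 * (B + 2 * d * ε * T) + (1 - 2 * ε) * d * X := by
      nlinarith [hmain, haux, hd, hε0]
    nlinarith
  have hrw : ((1 - 2 * ε) / (1 - 6 * ε)) * X + (2 / ((d:ℝ) * (1 - 6 * ε))) * B
      = ((1 - 2 * ε) * d * X + 2 * B) / ((d:ℝ) * (1 - 6 * ε)) := by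
    field_simp
  rw [hrw, le_div_iff₀ hdc]
  linarith [hkey]
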